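/- Let n be a positive integer and let f : 𝔻ⁿ → 𝔻 be a holomorphic function from the open unit polydisk in ℂⁿ to the open unit disk in ℂ. Then for every point z = (z₁, …, zₙ) ∈ 𝔻ⁿ, one has ∑_{i=1}^{n} (1 − |z_i|²) |∂f/∂z_i (z)| ≤ 1 − |f(z)|². -/

import Mathlib

open Complex Metric Set


lemma key_identity (u w : ℂ) :
    normSq (1 - (starRingEnd ℂ) u * w) - normSq (w - u)
      = (1 - normSq u) * (1 - normSq w) := by
  simp [Complex.normSq_apply, Complex.sub_re, Complex.sub_im, Complex.mul_re, Complex.mul_im]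
  ring

lemma mobius_lt (u w : ℂ) (hu : ‖u‖ < 1) (hw : ‖w‖ < 1) :
    ‖w - u‖ < ‖1 - (starRingEnd ℂ) u * w‖ := by
  have h1 : normSq u < 1 := by
    rw [Complex.normSq_eq_norm_sq]; nlinarith [norm_nonneg u, hu]
  have h2 : normSq w < 1 := by
    rw [Complex.normSq_eq_norm_sq]; nlinarith [norm_nonneg w, hw]
  have := key_identity u w
  have hlt : normSq (w - u) < normSq (1 - (starRingEnd ℂ) u * w) := by nlinarith
  have := Real.sqrt_lt_sqrt (normSq_nonneg _) hlt
  simpa [Complex.norm_def] using this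

lemma denom_ne (u w : ℂ) (hu : ‖u‖ < 1) (hw : ‖w‖ ≤ 1) :
    1 - (starRingEnd ℂ) u * w ≠ 0 := by
  intro h
  have h1 : ‖(starRingEnd ℂ) u * w‖ < 1 := by
    rw [norm_mul, RCLike.norm_conj]
    nlinarith [norm_nonneg u, norm_nonneg w]
  have : (1 : ℂ) = (starRingEnd ℂ) u * w := by linear_combination h
  rw [← this] at h1
  simp at h1

lemma schwarz_pick_zero (g : ℂ → ℂ) (hg : DifferentiableOn ℂ g (ball 0 1))
    (hm : MapsTo g (ball 0 1) (ball 0 1)) : ‖deriv g 0‖ ≤ 1 - ‖g 0‖ ^ 2 := by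
  have h0 : (0:ℂ) ∈ ball (0:ℂ) 1 := by simp
  set a := g 0 with ha_def
  have ha : ‖a‖ < 1 := by simpa using hm h0
  set F : ℂ → ℂ := fun w => (g w - a) / (1 - (starRingEnd ℂ) a * g w) with hF
  have hFdiff : DifferentiableOn ℂ F (ball 0 1) := by
    apply DifferentiableOn.div (hg.sub (differentiableOn_const a))
      ((differentiableOn_const 1).sub ((differentiableOn_const _).mul hg))
    intro w hw
    exact denom_ne a (g w) ha (by simpa using (mem_ball_zero_iff.1 (hm hw)).le)
  have hFmaps : MapsTo F (ball 0 1) (ball 0 1) := by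
    intro w hw
    have hgw : ‖g w‖ < 1 := by simpa using hm hw
    have := mobius_lt a (g w) ha hgw
    have hd := denom_ne a (g w) ha hgw.le
    simp only [mem_ball, dist_zero_right, hF]
    rw [norm_div, div_lt_one (norm_pos_iff.2 hd)]
    exact this
  have hF0 : F 0 = 0 := by simp [hF, ← ha_def]
  have hub : ‖deriv F 0‖ ≤ 1 / 1 := by
    have := Complex.norm_deriv_le_div_of_mapsTo_ball hFdiff (by rw [hF0]; exact hFmaps.mono_right ball_subset_closedBall) one_pos
    exact this
  -- compute deriv F 0
  have hga : DifferentiableAt ℂ g 0 := hg.differentiableAt (isOpen_ball.mem_nhds h0)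
  have hnsq : (1 : ℂ) - (starRingEnd ℂ) a * a ≠ 0 := denom_ne a a ha ha.le
  have hnum : HasDerivAt (fun w => g w - a) (deriv g 0) 0 := (hga.hasDerivAt).sub_const a
  have hden : HasDerivAt (fun w => 1 - (starRingEnd ℂ) a * g w)
      (-((starRingEnd ℂ) a * deriv g 0)) 0 := by
    simpa using ((hga.hasDerivAt.const_mul ((starRingEnd ℂ) a)).const_sub 1)
  have hFd : HasDerivAt F
      ((deriv g 0 * (1 - (starRingEnd ℂ) a * a) - (a - a) * -((starRingEnd ℂ) a * deriv g 0))
        / (1 - (starRingEnd ℂ) a * a) ^ 2) 0 := by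
    simpa [← ha_def] using hnum.fun_div hden hnsq
  have hderivF : deriv F 0 = deriv g 0 / (1 - (starRingEnd ℂ) a * a) := by
    rw [hFd.deriv]
    field_simp
    ring
  have hcoe : (1 : ℂ) - (starRingEnd ℂ) a * a = ((1 - ‖a‖ ^ 2 : ℝ) : ℂ) := by
    rw [Complex.conj_mul']
    push_cast
    ring
  have hpos : (0:ℝ) < 1 - ‖a‖ ^ 2 := by nlinarith [norm_nonneg a]
  rw [hderivF, hcoe] at hub
  rw [norm_div] at hub
  have : ‖((1 - ‖a‖ ^ 2 : ℝ) : ℂ)‖ = 1 - ‖a‖ ^ 2 := by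
    rw [Complex.norm_real, Real.norm_eq_abs, abs_of_pos hpos]
  rw [this, div_le_iff₀ hpos] at hub
  simpa using hub

/-- The open unit polydisk in `ℂⁿ`. -/
def polydisk (n : ℕ) : Set (Fin n → ℂ) := {z | ∀ i, ‖z i‖ < 1}

theorem schwarz_lemma_polydisk (n : ℕ) (hn : 0 < n) (f : (Fin n → ℂ) → ℂ)
    (hf : DifferentiableOn ℂ f (polydisk n))
    (hmap : ∀ z ∈ polydisk n, ‖f z‖ < 1)
    (z : Fin n → ℂ) (hz : z ∈ polydisk n) :
    ∑ i, (1 - ‖z i‖ ^ 2) * ‖fderiv ℂ f z (Pi.single i 1)‖ ≤ 1 - ‖f z‖ ^ 2 := by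
  have hopen : IsOpen (polydisk n) := by
    have : polydisk n = ⋂ i, (fun z : Fin n → ℂ => z i) ⁻¹' (ball 0 1) := by
      ext w; simp [polydisk, mem_ball_zero_iff]
    rw [this]
    exact isOpen_iInter_of_finite fun i => (isOpen_ball).preimage (continuous_apply i)
  set D : Fin n → ℂ := fun i => fderiv ℂ f z (Pi.single i 1) with hD
  set c : Fin n → ℂ := fun i => if D i = 0 then 1 else (starRingEnd ℂ) (D i) / ‖D i‖ with hc_def
  have hc1 : ∀ i, ‖c i‖ = 1 := by
    intro i
    by_cases h : D i = 0
    · simp [hc_def, h]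
    · simp only [hc_def, h, if_false]
      rw [norm_div, RCLike.norm_conj, Complex.norm_real, Real.norm_eq_abs,
        abs_of_pos (norm_pos_iff.2 h), div_self (norm_ne_zero_iff.2 h)]
  have hcD : ∀ i, c i * D i = (‖D i‖ : ℂ) := by
    intro i
    by_cases h : D i = 0
    · simp [hc_def, h]
    · simp only [hc_def, h, if_false]
      rw [div_mul_eq_mul_div, Complex.conj_mul']
      have habs : ((‖D i‖ : ℝ) : ℂ) ≠ 0 := by
        simpa using h
      rw [sq, mul_div_assoc, div_self habs, mul_one]
  set Φ : ℂ → Fin n → ℂ :=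
    fun ζ i => (z i + c i * ζ) / (1 + (starRingEnd ℂ) (z i) * (c i * ζ)) with hΦ
  -- rewrite each coordinate as Möbius with u = -(z i), w = c i * ζ
  have hrw : ∀ (i : Fin n) (ζ : ℂ),
      Φ ζ i = (c i * ζ - (-(z i))) / (1 - (starRingEnd ℂ) (-(z i)) * (c i * ζ)) := by
    intro i ζ; simp [hΦ]; ring_nf
  have hwnorm : ∀ (i : Fin n) (ζ : ℂ), ‖c i * ζ‖ = ‖ζ‖ := by
    intro i ζ; rw [norm_mul, hc1 i, one_mul]
  have hne : ∀ (i : Fin n) (ζ : ℂ), ζ ∈ ball (0:ℂ) 1 →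
      1 + (starRingEnd ℂ) (z i) * (c i * ζ) ≠ 0 := by
    intro i ζ hζ
    have := denom_ne (-(z i)) (c i * ζ) (by simpa using hz i)
      (by rw [hwnorm]; exact (mem_ball_zero_iff.1 hζ).le)
    simpa using this
  have hΦmaps : ∀ ζ ∈ ball (0:ℂ) 1, Φ ζ ∈ polydisk n := by
    intro ζ hζ i
    rw [hrw]
    have h1 := mobius_lt (-(z i)) (c i * ζ) (by simpa using hz i)
      (by rw [hwnorm]; exact mem_ball_zero_iff.1 hζ)
    have h2 : (1 : ℂ) - (starRingEnd ℂ) (-(z i)) * (c i * ζ) ≠ 0 := by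
      have := hne i ζ hζ; simpa using this
    rw [norm_div, div_lt_one (norm_pos_iff.2 h2)]
    exact h1
  have hΦdiff : DifferentiableOn ℂ Φ (ball 0 1) := by
    rw [differentiableOn_pi]
    intro i
    exact DifferentiableOn.div
      ((differentiableOn_const _).add ((differentiableOn_id).const_mul (c i)))
      ((differentiableOn_const 1).add
        (((differentiableOn_id).const_mul (c i)).const_mul ((starRingEnd ℂ) (z i))))
      (fun ζ hζ => by simpa [mul_assoc] using hne i ζ hζ)
  have hΦ0 : Φ 0 = z := by
    funext i; simp [hΦ]
  set g : ℂ → ℂ := f ∘ Φ with hg_def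
  have hgdiff : DifferentiableOn ℂ g (ball 0 1) :=
    hf.comp hΦdiff hΦmaps
  have hgmaps : MapsTo g (ball 0 1) (ball 0 1) := by
    intro ζ hζ
    rw [mem_ball_zero_iff]
    exact hmap _ (hΦmaps ζ hζ)
  have hg0 : g 0 = f z := by rw [hg_def]; simp [hΦ0]
  have hSP := schwarz_pick_zero g hgdiff hgmaps
  rw [hg0] at hSP
  -- compute deriv g 0
  set v : Fin n → ℂ := fun i => c i * (1 - (starRingEnd ℂ) (z i) * z i) with hv
  have hΦd : HasDerivAt Φ v 0 := by
    rw [hasDerivAt_pi]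
    intro i
    have hnum : HasDerivAt (fun ζ : ℂ => z i + c i * ζ) (c i) 0 := by
      simpa using ((hasDerivAt_id (0:ℂ)).const_mul (c i)).const_add (z i)
    have hden : HasDerivAt (fun ζ : ℂ => 1 + (starRingEnd ℂ) (z i) * (c i * ζ))
        ((starRingEnd ℂ) (z i) * c i) 0 := by
      simpa [mul_assoc] using
        (((hasDerivAt_id (0:ℂ)).const_mul (c i)).const_mul ((starRingEnd ℂ) (z i))).const_add 1
    have h2 : (1 : ℂ) + (starRingEnd ℂ) (z i) * (c i * 0) ≠ 0 := by
      simpa using hne i 0 (by simp)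
    have := hnum.fun_div hden h2
    convert this using 1
    case e'_4 => rfl
    have : (1 : ℂ) + (starRingEnd ℂ) (z i) * (c i * 0) = 1 := by simp
    rw [hv]
    field_simp
    ring
  have hfz : HasFDerivAt f (fderiv ℂ f z) z :=
    (hf.differentiableAt (hopen.mem_nhds hz)).hasFDerivAt
  have hfz' : HasFDerivAt f (fderiv ℂ f z) (Φ 0) := by rw [hΦ0]; exact hfz
  have hgd : HasDerivAt g (fderiv ℂ f z v) 0 := hfz'.comp_hasDerivAt 0 hΦd
  have hderivg : deriv g 0 = fderiv ℂ f z v := hgd.deriv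
  -- expand fderiv f z v as a sum
  have hvsum : v = ∑ i, v i • (Pi.single i 1 : Fin n → ℂ) := by
    funext j
    rw [Finset.sum_apply]
    simp [Pi.single_apply, Finset.sum_ite_eq']
  have hsum : fderiv ℂ f z v = ∑ i, v i * D i := by
    conv_lhs => rw [hvsum]
    rw [map_sum]
    congr 1; funext i
    rw [ContinuousLinearMap.map_smul]
    simp [hD, smul_eq_mul]
  have hterm : ∀ i, v i * D i = (((1 - ‖z i‖ ^ 2) * ‖D i‖ : ℝ) : ℂ) := by
    intro i
    show c i * (1 - (starRingEnd ℂ) (z i) * z i) * D i = _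
    have hzz : (starRingEnd ℂ) (z i) * z i = ((‖z i‖ ^ 2 : ℝ) : ℂ) := by
      rw [Complex.conj_mul']; push_cast; ring
    rw [hzz]
    push_cast
    rw [mul_comm (c i), mul_assoc, hcD i]
  have hnorm : ‖fderiv ℂ f z v‖ = ∑ i, (1 - ‖z i‖ ^ 2) * ‖D i‖ := by
    rw [hsum]
    have : ∑ i, v i * D i = (((∑ i, (1 - ‖z i‖ ^ 2) * ‖D i‖ : ℝ)) : ℂ) := by
      push_cast
      exact Finset.sum_congr rfl fun i _ => by rw [hterm i]; push_cast; ring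
    rw [this, Complex.norm_real, Real.norm_eq_abs, _root_.abs_of_nonneg]
    apply Finset.sum_nonneg
    intro i _
    have : ‖z i‖ < 1 := hz i
    have h1 : (0:ℝ) ≤ 1 - ‖z i‖ ^ 2 := by nlinarith [norm_nonneg (z i)]
    positivity
  rw [hderivg, hnorm] at hSP
  exact hSP
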